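/- Let p be a prime and y ∈ ℚ_p^n. Consider the set E ⊂ ℝ² of pairs (|q₀ + q·y|_p · ‖(q₀,q)‖_∞, ‖q‖_p · ‖(q₀,q)‖_∞) where (q₀,q) ranges over ℤ[1/p]^{n+1}. If (x_k, z_k) ∈ E is a sequence with (z_k) bounded and x_k → 0, then x_k = 0 for all but finitely many k. -/

import Mathlib

open scoped BigOperators

/-- `x` lies in `ℤ[1/p] ⊂ ℚ`. -/
def ZInvP (p : ℕ) (x : ℚ) : Prop := ∃ (a : ℤ) (k : ℕ), x = a / (p : ℚ) ^ k

/-- `‖q‖_p`: max of `p`-adic absolute values of the coordinates of a rational vector. -/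
noncomputable def pnorm (p : ℕ) {m : ℕ} (q : Fin m → ℚ) : ℝ :=
  ⨆ i, ((padicNorm p (q i) : ℚ) : ℝ)

/-- `‖q‖_∞`: max of archimedean absolute values of the coordinates of a rational vector. -/
noncomputable def supnorm {m : ℕ} (q : Fin m → ℚ) : ℝ :=
  ⨆ i, |((q i : ℚ) : ℝ)|

/-- `‖v‖_p` for a vector of `p`-adic numbers. -/
noncomputable def pnormP {p : ℕ} [Fact p.Prime] {m : ℕ} (v : Fin m → ℚ_[p]) : ℝ :=
  ⨆ i, ‖v i‖

section Aux

variable {p : ℕ} [hp : Fact p.Prime]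

lemma hp1 : (1:ℚ) < p := by exact_mod_cast hp.out.one_lt

lemma ppos : (0:ℚ) < p := by exact_mod_cast hp.out.pos

/-- padicNorm of p^v for integer v. -/
lemma padicNorm_p_zpow (v : ℤ) : padicNorm p ((p:ℚ) ^ v) = (p:ℚ) ^ (-v) := by
  have hpow : ∀ k : ℕ, padicNorm p ((p:ℚ) ^ k) = (p:ℚ) ^ (-(k:ℤ)) := by
    intro k
    induction k with
    | zero => simp [padicNorm.one]
    | succ m ih =>
      rw [pow_succ, padicNorm.mul, ih, padicNorm.padicNorm_p_of_prime]
      rw [show (-(m+1:ℕ):ℤ) = -(m:ℤ) + (-1) by push_cast; ring, zpow_add₀ (ne_of_gt ppos)]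
      simp
  rcases Int.eq_nat_or_neg v with ⟨k, rfl | rfl⟩
  · rw [zpow_natCast, hpow k]
  · rw [zpow_neg, zpow_natCast, neg_neg, ← one_div, padicNorm.div, padicNorm.one, hpow k,
      one_div, ← zpow_neg, neg_neg]

/-- product formula ingredient for integers -/
lemma int_prod_ge_one (a : ℤ) (ha : a ≠ 0) : 1 ≤ padicNorm p (a:ℚ) * |(a:ℚ)| := by
  have hval : padicNorm p (a:ℚ) = (p:ℚ) ^ (-(padicValInt p a : ℤ)) := by
    rw [padicNorm.eq_zpow_of_nonzero (by exact_mod_cast ha), padicValRat.of_int]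
  have hdvd : (p:ℤ) ^ padicValInt p a ∣ a := padicValInt_dvd a
  have hle : (p:ℤ) ^ padicValInt p a ≤ |a| := Int.le_of_dvd (abs_pos.2 ha) ((dvd_abs _ _).2 hdvd)
  have hleq : ((p:ℚ)) ^ (padicValInt p a) ≤ |(a:ℚ)| := by exact_mod_cast hle
  rw [hval, zpow_neg, inv_mul_eq_div, one_le_div (zpow_pos ppos _)]
  rw [← zpow_natCast (p:ℚ)] at hleq
  exact hleq

end Aux

section Aux2
variable {p : ℕ} [hp : Fact p.Prime]

lemma prod_formula (r : ℚ) (hr : ZInvP p r) (h0 : r ≠ 0) : 1 ≤ padicNorm p r * |r| := by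
  obtain ⟨b, k, rfl⟩ := hr
  have hb : b ≠ 0 := by rintro rfl; simp at h0
  have hd : padicNorm p ((b:ℚ)/(p:ℚ)^k) = padicNorm p (b:ℚ) / (p:ℚ)^(-(k:ℤ)) := by
    rw [padicNorm.div, ← zpow_natCast (p:ℚ), padicNorm_p_zpow]
  have key := int_prod_ge_one (p := p) b hb
  have hzp : (0:ℚ) < (p:ℚ)^(k:ℕ) := pow_pos ppos _
  have habs : |(b:ℚ)/(p:ℚ)^k| = |(b:ℚ)| / (p:ℚ)^k := by
    rw [abs_div, abs_of_pos hzp]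
  rw [hd, habs]
  have : padicNorm p (b:ℚ) / (p:ℚ)^(-(k:ℤ)) * (|(b:ℚ)| / (p:ℚ)^k) = padicNorm p (b:ℚ) * |(b:ℚ)| := by
    rw [zpow_neg, zpow_natCast, div_inv_eq_mul]
    rw [mul_comm (padicNorm p (b:ℚ)) ((p:ℚ)^k), mul_assoc, mul_comm, mul_assoc, div_mul_cancel₀ _ (ne_of_gt hzp), mul_comm]
  rw [this]; exact key

lemma ZInvP_intc (a : ℤ) : ZInvP p (a:ℚ) := ⟨a, 0, by simp⟩

lemma ZInvP_mul_zpow (r : ℚ) (hr : ZInvP p r) (v : ℤ) : ZInvP p (r * (p:ℚ)^v) := by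
  obtain ⟨b, k, rfl⟩ := hr
  have hpne : ((p:ℚ)) ≠ 0 := ne_of_gt ppos
  rcases Int.eq_nat_or_neg v with ⟨m, rfl | rfl⟩
  · exact ⟨b * p^m, k, by push_cast [zpow_natCast]; field_simp⟩
  · exact ⟨b, k + m, by push_cast [zpow_neg, zpow_natCast, pow_add]; field_simp⟩

lemma eq_int_of_norm_le_one (s : ℚ) (hs : ZInvP p s) (h : padicNorm p s ≤ 1) :
    ∃ a : ℤ, s = (a:ℚ) := by
  obtain ⟨b, k, rfl⟩ := hs
  by_cases hb : b = 0
  · exact ⟨0, by simp [hb]⟩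
  have hd : padicNorm p ((b:ℚ)/(p:ℚ)^k) = padicNorm p (b:ℚ) / (p:ℚ)^(-(k:ℤ)) := by
    rw [padicNorm.div, ← zpow_natCast (p:ℚ), padicNorm_p_zpow]
  rw [hd, div_le_one (zpow_pos ppos _)] at h
  obtain ⟨a, ha⟩ := (padicNorm.dvd_iff_norm_le (p := p)).2 h
  have hpne : ((p:ℚ))^k ≠ 0 := pow_ne_zero _ (ne_of_gt ppos)
  refine ⟨a, ?_⟩
  rw [ha]
  push_cast
  rw [mul_comm, mul_div_assoc, div_self hpne, mul_one]

lemma eq_div_of_norm_le (s : ℚ) (hs : ZInvP p s) (c : ℕ) (h : padicNorm p s ≤ (p:ℚ)^(c:ℤ)) :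
    ∃ a : ℤ, s = (a:ℚ) / (p:ℚ)^c := by
  have hpne : ((p:ℚ)) ≠ 0 := ne_of_gt ppos
  have hpkne : ((p:ℚ))^(c:ℕ) ≠ 0 := pow_ne_zero _ hpne
  have h2 : padicNorm p (s * (p:ℚ)^(c:ℤ)) ≤ 1 := by
    rw [padicNorm.mul, padicNorm_p_zpow]
    calc padicNorm p s * (p:ℚ)^(-(c:ℤ)) ≤ (p:ℚ)^(c:ℤ) * (p:ℚ)^(-(c:ℤ)) :=
          mul_le_mul_of_nonneg_right h (le_of_lt (zpow_pos ppos _))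
      _ = 1 := by rw [← zpow_add₀ hpne]; simp
  obtain ⟨a, ha⟩ := eq_int_of_norm_le_one _ (ZInvP_mul_zpow s hs _) h2
  refine ⟨a, ?_⟩
  rw [eq_div_iff hpkne, ← zpow_natCast (p:ℚ), ha]

end Aux2

section Aux3
variable {p : ℕ} [hp : Fact p.Prime]

lemma le_csupr_fin {m : ℕ} (g : Fin m → ℝ) (i : Fin m) : g i ≤ ⨆ j, g j :=
  le_ciSup (Set.finite_range g).bddAbove i

lemma csupr_scale {m : ℕ} [Nonempty (Fin m)] (g : Fin m → ℝ) (hg : ∀ i, 0 ≤ g i)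
    (c : ℝ) (hc : 0 ≤ c) : ⨆ i, c * g i = c * ⨆ i, g i := by
  rcases eq_or_lt_of_le hc with rfl | hc
  · simp
  · refine le_antisymm (ciSup_le fun i => mul_le_mul_of_nonneg_left (le_csupr_fin g i) hc.le) ?_
    rw [mul_comm, ← le_div_iff₀ hc]
    refine ciSup_le fun i => ?_
    rw [le_div_iff₀ hc, mul_comm]
    exact le_csupr_fin (fun j => c * g j) i

lemma csupr_attained {m : ℕ} [Nonempty (Fin m)] (g : Fin m → ℝ) : ∃ i, (⨆ j, g j) = g i := by
  obtain ⟨i, hi⟩ := Finite.exists_max g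
  exact ⟨i, le_antisymm (ciSup_le hi) (le_csupr_fin g i)⟩

lemma norm_sum_le_max {ι : Type*} (s : Finset ι) (f : ι → ℚ_[p]) (B : ℝ) (hB : 0 ≤ B)
    (h : ∀ i ∈ s, ‖f i‖ ≤ B) : ‖∑ i ∈ s, f i‖ ≤ B := by
  classical
  induction s using Finset.induction with
  | empty => simpa using hB
  | @insert a s ha ih =>
    rw [Finset.sum_insert ha]
    exact le_trans (Padic.nonarchimedean _ _)
      (max_le (h _ (Finset.mem_insert_self _ _))
        (ih fun i hi => h i (Finset.mem_insert_of_mem hi)))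

lemma supnorm_nonneg {m : ℕ} (q : Fin m → ℚ) : 0 ≤ supnorm q :=
  Real.iSup_nonneg fun i => abs_nonneg _

lemma pnorm_nonneg {m : ℕ} (q : Fin m → ℚ) : 0 ≤ pnorm p q :=
  Real.iSup_nonneg fun i => by exact_mod_cast padicNorm.nonneg _

lemma supnorm_cons_zero {m : ℕ} (q0 : ℚ) (q : Fin m → ℚ) :
    |((q0:ℚ):ℝ)| ≤ supnorm (Fin.cons q0 q) := by
  have := le_csupr_fin (fun j => |((((Fin.cons q0 q : Fin (m+1) → ℚ)) j : ℚ) : ℝ)|) 0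
  simpa [supnorm] using this

lemma supnorm_cons_succ {m : ℕ} (q0 : ℚ) (q : Fin m → ℚ) (i : Fin m) :
    |((q i :ℚ):ℝ)| ≤ supnorm (Fin.cons q0 q) := by
  have := le_csupr_fin (fun j => |((((Fin.cons q0 q : Fin (m+1) → ℚ)) j : ℚ) : ℝ)|) i.succ
  simpa [supnorm] using this

end Aux3

section Key
variable {p : ℕ} [hp : Fact p.Prime] {n : ℕ}

lemma key_lemma (y : Fin n → ℚ_[p]) (M : ℝ) :
    ∃ ε : ℝ, 0 < ε ∧ ε ≤ 1 ∧ ∀ (q0 : ℚ) (q : Fin n → ℚ), ZInvP p q0 → (∀ i, ZInvP p (q i)) →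
      pnorm p q * supnorm (Fin.cons q0 q) ≤ M →
      ‖((q0 : ℚ_[p]) + ∑ i, (q i : ℚ_[p]) * y i)‖ * supnorm (Fin.cons q0 q) < ε →
      ‖((q0 : ℚ_[p]) + ∑ i, (q i : ℚ_[p]) * y i)‖ * supnorm (Fin.cons q0 q) = 0 := by
  classical
  have hp1R : (1:ℝ) < (p:ℝ) := by exact_mod_cast hp.out.one_lt
  have hpposR : (0:ℝ) < (p:ℝ) := lt_trans one_pos hp1R
  -- choose c with all ‖y i‖ ≤ p^c
  obtain ⟨R, hR⟩ := (Set.finite_range fun i => ‖y i‖).bddAbove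
  obtain ⟨c, hc⟩ := pow_unbounded_of_one_lt R hp1R
  have hyc : ∀ i, ‖y i‖ ≤ (p:ℝ)^c :=
    fun i => le_trans (hR (Set.mem_range_self i)) hc.le
  -- the finite set of candidates
  set g : ℤ × (Fin n → ℤ) → ℝ := fun a =>
    ‖((((a.1:ℚ) / (p:ℚ)^c : ℚ)) : ℚ_[p]) + ∑ i, ((a.2 i : ℚ) : ℚ_[p]) * y i‖ *
      supnorm (Fin.cons ((a.1:ℚ) / (p:ℚ)^c) (fun i => (a.2 i : ℚ))) with hg
  set S : Set (ℤ × (Fin n → ℤ)) := {a | |(a.1:ℝ)| ≤ (p:ℝ)^c * M ∧ ∀ i, |(a.2 i:ℝ)| ≤ M}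
    with hS
  have hSfin : S.Finite := by
    apply Set.Finite.subset
      (Set.Finite.prod (Set.finite_Icc (-⌈(p:ℝ)^c * M⌉) ⌈(p:ℝ)^c * M⌉)
        (Set.Finite.pi fun _ : Fin n => Set.finite_Icc (-⌈M⌉) ⌈M⌉))
    rintro ⟨a0, a⟩ ⟨h1, h2⟩
    constructor
    · simp only [Set.mem_Icc]
      have habs := abs_le.1 (le_trans h1 (Int.le_ceil ((p:ℝ)^c * M)))
      constructor
      · exact_mod_cast habs.1
      · exact_mod_cast habs.2
    · intro i _
      simp only [Set.mem_Icc]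
      have habs := abs_le.1 (le_trans (h2 i) (Int.le_ceil M))
      constructor
      · exact_mod_cast habs.1
      · exact_mod_cast habs.2
  set V : Set ℝ := (g '' S) ∩ Set.Ioi (0:ℝ) with hV
  have hVfin : V.Finite := (hSfin.image g).inter_of_left _
  have hfin2 : (insert (1:ℝ) V).Finite := hVfin.insert 1
  set ε := sInf (insert (1:ℝ) V) with hε
  have hmem : ε ∈ insert (1:ℝ) V :=
    Set.Nonempty.csInf_mem (Set.insert_nonempty _ _) hfin2
  have hε0 : 0 < ε := by
    rcases hmem with h | h
    · rw [h]; exact one_pos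
    · exact (Set.mem_of_mem_inter_right h : ε ∈ Set.Ioi (0:ℝ))
  have hε1 : ε ≤ 1 := csInf_le hfin2.bddBelow (Set.mem_insert _ _)
  have hεle : ∀ v ∈ V, ε ≤ v := fun v hv => csInf_le hfin2.bddBelow (Set.mem_insert_of_mem _ hv)
  refine ⟨ε, hε0, hε1, ?_⟩
  intro q0 q hq0 hq hzM hlt
  set X := ‖((q0 : ℚ_[p]) + ∑ i, (q i : ℚ_[p]) * y i)‖ with hX
  set N := supnorm (Fin.cons q0 q) with hN
  have hX0 : 0 ≤ X := norm_nonneg _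
  have hN0 : 0 ≤ N := supnorm_nonneg _
  rcases eq_or_lt_of_le (mul_nonneg hX0 hN0) with h0 | hxpos
  · exact h0.symm
  exfalso
  by_cases hq_zero : ∀ i, q i = 0
  -- Case A : q = 0
  · have hsum : ∑ i, ((q i:ℚ) : ℚ_[p]) * y i = 0 :=
      Finset.sum_eq_zero fun i _ => by rw [hq_zero i]; simp
    have hq0ne : q0 ≠ 0 := by
      rintro rfl
      rw [hX, hsum] at hxpos
      simp at hxpos
    have hXval : X = ((padicNorm p q0 : ℚ) : ℝ) := by
      rw [hX, hsum, add_zero, Padic.eq_padicNorm]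
    have h1 : (1:ℝ) ≤ ((padicNorm p q0 : ℚ):ℝ) * |((q0:ℚ):ℝ)| := by
      have := prod_formula q0 hq0 hq0ne
      have h2 : ((padicNorm p q0 * |q0| : ℚ) : ℝ) = ((padicNorm p q0 : ℚ):ℝ) * |((q0:ℚ):ℝ)| := by
        push_cast; ring
      calc (1:ℝ) = ((1:ℚ):ℝ) := by norm_num
        _ ≤ _ := by rw [← h2]; exact_mod_cast this
    have h3 : (1:ℝ) ≤ X * N := by
      calc (1:ℝ) ≤ ((padicNorm p q0 : ℚ):ℝ) * |((q0:ℚ):ℝ)| := h1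
        _ ≤ X * N := by
            rw [hXval]
            exact mul_le_mul_of_nonneg_left (supnorm_cons_zero q0 q)
              (by exact_mod_cast padicNorm.nonneg q0)
    linarith
  -- Case B : q ≠ 0
  · push_neg at hq_zero
    obtain ⟨i₀, hi₀⟩ := hq_zero
    haveI : Nonempty (Fin n) := ⟨i₀⟩
    obtain ⟨j, hj⟩ := csupr_attained (fun i => ((padicNorm p (q i) : ℚ) : ℝ))
    have hpnq : pnorm p q = ((padicNorm p (q j) : ℚ) : ℝ) := hj
    have hti₀ : (0:ℚ) < padicNorm p (q i₀) :=
      lt_of_le_of_ne (padicNorm.nonneg _) (Ne.symm (padicNorm.nonzero hi₀))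
    have htpos : (0:ℚ) < padicNorm p (q j) := by
      have h4 : ((padicNorm p (q i₀) : ℚ):ℝ) ≤ ((padicNorm p (q j) : ℚ):ℝ) := by
        rw [← hpnq]
        exact le_csupr_fin (fun i => ((padicNorm p (q i) : ℚ) : ℝ)) i₀
      have : (0:ℝ) < ((padicNorm p (q j) : ℚ):ℝ) :=
        lt_of_lt_of_le (by exact_mod_cast hti₀) h4
      exact_mod_cast this
    have hqj : q j ≠ 0 := by
      intro h; rw [h, padicNorm.zero] at htpos; exact lt_irrefl _ htpos
    set m := padicValRat p (q j) with hm
    have htm : padicNorm p (q j) = (p:ℚ)^(-m) := padicNorm.eq_zpow_of_nonzero hqj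
    set s : ℚ := (p:ℚ)^(-m) with hs
    have hspos : (0:ℚ) < s := zpow_pos ppos _
    set tR : ℝ := ((padicNorm p (q j) : ℚ) : ℝ) with htR
    have htRpos : (0:ℝ) < tR := by rw [htR]; exact_mod_cast htpos
    set q0' := q0 * s with hq0'
    set q' : Fin n → ℚ := fun i => q i * s with hq'
    have hzq0' : ZInvP p q0' := ZInvP_mul_zpow q0 hq0 _
    -- F2
    have F2 : padicNorm p s = (padicNorm p (q j))⁻¹ := by
      rw [hs, padicNorm_p_zpow, neg_neg, htm, hs, ← zpow_neg, neg_neg]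
    -- F3
    have F3 : |((s:ℚ):ℝ)| = tR := by
      have h5 : ((s:ℚ):ℝ) = (p:ℝ)^(-m) := by rw [hs, Rat.cast_zpow, Rat.cast_natCast]
      rw [h5, abs_of_pos (zpow_pos hpposR _), htR, htm]
      exact h5.symm
    -- F4
    have F4 : (Fin.cons q0' q' : Fin (n+1) → ℚ) = fun k => (Fin.cons q0 q : Fin (n+1) → ℚ) k * s := by
      funext k
      refine Fin.cases ?_ ?_ k
      · simp [hq0']
      · intro i; simp [hq']
    -- F5
    have F5 : supnorm (Fin.cons q0' q') = tR * N := by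
      rw [supnorm, F4]
      have h6 : ∀ k : Fin (n+1), |(((Fin.cons q0 q : Fin (n+1) → ℚ) k * s : ℚ):ℝ)|
          = tR * |(((Fin.cons q0 q : Fin (n+1) → ℚ) k : ℚ):ℝ)| := by
        intro k
        push_cast
        rw [abs_mul, mul_comm, F3]
      simp only [h6]
      rw [csupr_scale _ (fun k => abs_nonneg _) _ htRpos.le]
      rfl
    have F6 : supnorm (Fin.cons q0' q') ≤ M := by
      rw [F5, ← hpnq]; exact hzM
    -- integrality of q'
    have F7 : ∀ i, padicNorm p (q' i) ≤ 1 := by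
      intro i
      have h7 : padicNorm p (q i) ≤ padicNorm p (q j) := by
        have := le_csupr_fin (fun i => ((padicNorm p (q i) : ℚ) : ℝ)) i
        rw [hj, htR] at this
        exact_mod_cast this
      rw [hq', padicNorm.mul, F2, ← div_eq_mul_inv, div_le_one htpos]
      exact h7
    have F8 : ∀ i, ∃ a : ℤ, q' i = (a:ℚ) :=
      fun i => eq_int_of_norm_le_one _ (ZInvP_mul_zpow (q i) (hq i) _) (F7 i)
    choose a ha using F8
    -- factorization
    have hfactor : ((q0':ℚ):ℚ_[p]) + ∑ i, ((q' i:ℚ):ℚ_[p]) * y i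
        = ((s:ℚ):ℚ_[p]) * (((q0:ℚ):ℚ_[p]) + ∑ i, ((q i:ℚ):ℚ_[p]) * y i) := by
      rw [hq0', hq']
      simp only [Rat.cast_mul, mul_add, Finset.mul_sum]
      congr 1
      · ring
      · exact Finset.sum_congr rfl fun i _ => by ring
    set X' := ‖((q0':ℚ):ℚ_[p]) + ∑ i, ((q' i:ℚ):ℚ_[p]) * y i‖ with hX'
    have F9 : X' = tR⁻¹ * X := by
      rw [hX', hfactor, norm_mul, Padic.eq_padicNorm, F2, hX]
      congr 1
      rw [htR]
      push_cast; ring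
    have F10 : X' * supnorm (Fin.cons q0' q') = X * N := by
      rw [F9, F5]
      calc tR⁻¹ * X * (tR * N) = (tR⁻¹ * tR) * (X * N) := by ring
        _ = X * N := by rw [inv_mul_cancel₀ (ne_of_gt htRpos), one_mul]
    -- q0' has bounded p-adic norm
    have F11 : padicNorm p q0' ≤ (p:ℚ)^(c:ℤ) := by
      by_contra hbig
      push_neg at hbig
      have hq0'ne : q0' ≠ 0 := by
        intro h
        rw [h, padicNorm.zero] at hbig
        exact absurd hbig (not_lt.2 (le_of_lt (zpow_pos ppos _)))
      have hsumle : ‖∑ i, ((q' i:ℚ):ℚ_[p]) * y i‖ ≤ (p:ℝ)^c := by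
        apply norm_sum_le_max _ _ _ (pow_nonneg hpposR.le c)
        intro i _
        rw [norm_mul]
        calc ‖((q' i:ℚ):ℚ_[p])‖ * ‖y i‖ ≤ 1 * (p:ℝ)^c := by
              apply mul_le_mul _ (hyc i) (norm_nonneg _) zero_le_one
              have hcast : ((q' i:ℚ):ℚ_[p]) = ((a i : ℤ):ℚ_[p]) := by
                rw [ha i]; push_cast; ring
              rw [hcast]
              exact Padic.norm_int_le_one _
          _ = (p:ℝ)^c := one_mul _
      have hnq0' : ‖((q0':ℚ):ℚ_[p])‖ = ((padicNorm p q0' : ℚ):ℝ) := Padic.eq_padicNorm _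
      have hlt2 : ‖∑ i, ((q' i:ℚ):ℚ_[p]) * y i‖ < ‖((q0':ℚ):ℚ_[p])‖ := by
        apply lt_of_le_of_lt hsumle
        rw [hnq0']
        have : ((p:ℚ)^(c:ℤ) : ℚ) < padicNorm p q0' := hbig
        have h8 : (((p:ℚ)^(c:ℤ) : ℚ):ℝ) < ((padicNorm p q0' : ℚ):ℝ) := by exact_mod_cast this
        calc ((p:ℝ))^c = (((p:ℚ)^(c:ℤ) : ℚ):ℝ) := by
              rw [Rat.cast_zpow, Rat.cast_natCast, zpow_natCast]
          _ < _ := h8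
      have hXeq : X' = ‖((q0':ℚ):ℚ_[p])‖ := by
        rw [hX', Padic.add_eq_max_of_ne (ne_of_gt hlt2), max_eq_left hlt2.le]
      have h9 : (1:ℝ) ≤ X' * supnorm (Fin.cons q0' q') := by
        have hpf := prod_formula q0' hzq0' hq0'ne
        have h10 : (1:ℝ) ≤ ((padicNorm p q0' : ℚ):ℝ) * |((q0':ℚ):ℝ)| := by
          have : ((padicNorm p q0' * |q0'| : ℚ):ℝ) = ((padicNorm p q0' : ℚ):ℝ) * |((q0':ℚ):ℝ)| := by
            push_cast; ring
          calc (1:ℝ) = ((1:ℚ):ℝ) := by norm_num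
            _ ≤ _ := by rw [← this]; exact_mod_cast hpf
        calc (1:ℝ) ≤ ((padicNorm p q0' : ℚ):ℝ) * |((q0':ℚ):ℝ)| := h10
          _ ≤ X' * supnorm (Fin.cons q0' q') := by
              rw [hXeq, hnq0']
              exact mul_le_mul_of_nonneg_left (supnorm_cons_zero q0' q')
                (by exact_mod_cast padicNorm.nonneg q0')
      rw [F10] at h9
      linarith
    obtain ⟨a0, ha0⟩ := eq_div_of_norm_le q0' hzq0' c F11
    -- bounds
    have hq0'le : |((q0':ℚ):ℝ)| ≤ M := le_trans (supnorm_cons_zero q0' q') F6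
    have hq'le : ∀ i, |((q' i:ℚ):ℝ)| ≤ M := fun i => le_trans (supnorm_cons_succ q0' q' i) F6
    have hmemS : (a0, a) ∈ S := by
      constructor
      · have h11 : ((a0:ℚ):ℝ) = ((q0':ℚ):ℝ) * (p:ℝ)^c := by
          have : (a0:ℚ) = q0' * (p:ℚ)^c := by
            rw [ha0, div_mul_cancel₀ _ (pow_ne_zero _ (ne_of_gt ppos))]
          rw [this]; push_cast; ring
        have : |((a0:ℤ):ℝ)| = |((q0':ℚ):ℝ)| * (p:ℝ)^c := by
          rw [show ((a0:ℤ):ℝ) = ((a0:ℚ):ℝ) by push_cast; ring, h11, abs_mul,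
            abs_of_pos (pow_pos hpposR c)]
        rw [this, mul_comm ((p:ℝ)^c) M]
        exact mul_le_mul_of_nonneg_right hq0'le (pow_nonneg hpposR.le c)
      · intro i
        have : |((a i:ℤ):ℝ)| = |((q' i:ℚ):ℝ)| := by
          rw [show ((a i:ℤ):ℝ) = ((q' i:ℚ):ℝ) by rw [ha i]; push_cast; ring]
        rw [this]
        exact hq'le i
    have hgval : g (a0, a) = X * N := by
      rw [hg]
      simp only
      have e3 : ∑ i, (((a i:ℤ):ℚ):ℚ_[p]) * y i = ∑ i, ((q' i:ℚ):ℚ_[p]) * y i :=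
        Finset.sum_congr rfl fun i _ => by rw [ha i]
      have e2 : (fun i => ((a i:ℤ):ℚ)) = q' := funext fun i => (ha i).symm
      rw [e3, e2, ← ha0, F10]
    have hmemV : X * N ∈ V := ⟨⟨(a0, a), hmemS, hgval⟩, hxpos⟩
    exact absurd hlt (not_lt.2 (hεle _ hmemV))

end Key

theorem stmt_0 (p : ℕ) [Fact p.Prime] (n : ℕ) (y : Fin n → ℚ_[p])
    (x z : ℕ → ℝ)
    (hE : ∀ k, ∃ (q0 : ℚ) (q : Fin n → ℚ), ZInvP p q0 ∧ (∀ i, ZInvP p (q i)) ∧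
      x k = ‖((q0 : ℚ_[p]) + ∑ i, (q i : ℚ_[p]) * y i)‖ * supnorm (Fin.cons q0 q) ∧
      z k = pnorm p q * supnorm (Fin.cons q0 q))
    (hz : ∃ M : ℝ, ∀ k, |z k| ≤ M)
    (hx : Filter.Tendsto x Filter.atTop (nhds 0)) :
    ∀ᶠ k in Filter.atTop, x k = 0 := by
  obtain ⟨M, hM⟩ := hz
  obtain ⟨ε, hε0, hε1, hkey⟩ := key_lemma y M
  have hev : ∀ᶠ k in Filter.atTop, x k < ε := hx.eventually_lt_const hε0
  filter_upwards [hev] with k hk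
  obtain ⟨q0, q, hq0, hq, hxk, hzk⟩ := hE k
  have hzle : pnorm p q * supnorm (Fin.cons q0 q) ≤ M := by
    rw [← hzk]
    exact le_trans (le_abs_self _) (hM k)
  rw [hxk]
  exact hkey q0 q hq0 hq hzle (by rw [← hxk]; exact hk)
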